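/- Let $k$ be a field of characteristic 0, $g \geq 3$. Under the change of coordinates $s' = s + p(s)\epsilon$, $t = t' + q(t)\eta$ on the charts $U_1 = \mathrm{Spec}\, k[s,\epsilon]/\epsilon^2$ and $U_2 = \mathrm{Spec}\, k[t,\eta]/\eta^2$ of a ribbon with gluing data $s^{-1} = t + F(t)\eta$, $\epsilon = t^{-g-1}\eta$, the new gluing function is $F(t') + q(t') - t'^{1-g}p(t'^{-1})$; i.e., $s'^{-1} = t' + (F(t') + q(t') - t'^{1-g} p(t'^{-1}))\eta$ holds in $k[t, t^{-1}, \eta]/(\eta^2)$. -/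

import Mathlib

open LaurentPolynomial TrivSqZeroExt Polynomial

/-- Evaluation of a Laurent polynomial at a unit `u` of a commutative
`k`-algebra (sending `t ↦ u`, `t⁻¹ ↦ u⁻¹`). -/
noncomputable def laurentEval {k : Type*} [Field k] {R : Type*} [CommRing R]
    [Algebra k R] (u : Rˣ) : LaurentPolynomial k →ₐ[k] R :=
  AddMonoidAlgebra.lift k R ℤ ((Units.coeHom R).comp (zpowersHom Rˣ u))

/-- The unit `t` of `k[t,t⁻¹,η]/(η²) = DualNumber k[t,t⁻¹]`. -/
noncomputable def tUnit (k : Type*) [Field k] : (DualNumber (LaurentPolynomial k))ˣ :=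
  ((LaurentPolynomial.isUnit_T (R := k) 1).map
    (TrivSqZeroExt.inlHom (LaurentPolynomial k) (LaurentPolynomial k))).unit

/-- in `k[t,t⁻¹,η]/(η²)`, for a ribbon with gluing data
`s⁻¹ = t + F(t)η`, `ε = t^{-g-1}η`, the change of coordinates
`s' = s + p(s)ε`, `t = t' + q(t)η` produces the new gluing relation
`s'⁻¹ = t' + (F(t') + q(t') - t'^{1-g} p(t'⁻¹))η`. -/
theorem ringlemma {S : Type*} [CommRing S] (x1 xm F Q P Tg1 Tg b : S)
    (h2' : xm * F + b * x1 = 0) (hTg : xm * Tg1 = Tg) :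
    xm * (-Q + (F + Q - P * Tg1)) + (b * x1 + P * Tg) = 0 := by
  linear_combination h2' - P * hTg
noncomputable def Tu (k : Type*) [Field k] : (LaurentPolynomial k)ˣ :=
  ⟨T 1, T (-1), by rw [← T_add]; norm_num [T_zero], by rw [← T_add]; norm_num [T_zero]⟩

theorem Tu_zpow_val (k : Type*) [Field k] (n : ℤ) :
    ((Tu k ^ n : (LaurentPolynomial k)ˣ) : LaurentPolynomial k) = T n := by
  cases n with
  | ofNat m =>
    simp only [Int.ofNat_eq_coe, zpow_natCast, Units.val_pow_eq_pow_val]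
    show (T 1 : LaurentPolynomial k) ^ m = _
    rw [T_pow]; norm_num
  | negSucc m =>
    rw [zpow_negSucc, ← inv_pow, Units.val_pow_eq_pow_val]
    show (T (-1) : LaurentPolynomial k) ^ (m+1) = _
    rw [T_pow]; norm_num [Int.negSucc_eq]

theorem laurentEval_T {k : Type*} [Field k] {R : Type*} [CommRing R]
    [Algebra k R] (u : Rˣ) (n : ℤ) :
    laurentEval (k := k) u (T n) = ((u ^ n : Rˣ) : R) := by
  rw [laurentEval, T]
  rw [AddMonoidAlgebra.lift_single]
  simp

theorem laurentEval_Tu {k : Type*} [Field k] (F : LaurentPolynomial k) :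
    laurentEval (k := k) (Tu k) F = F := by
  have : laurentEval (k := k) (Tu k) = AlgHom.id k (LaurentPolynomial k) :=
    AddMonoidAlgebra.algHom_ext (fun n => by
      rw [show (AddMonoidAlgebra.single n (1:k)) = T n from rfl, laurentEval_T, Tu_zpow_val]; rfl) (Subsingleton.elim _ _)
  rw [this]; rfl

theorem algHom_laurentEval {k : Type*} [Field k] {R S : Type*} [CommRing R] [CommRing S]
    [Algebra k R] [Algebra k S] (φ : R →ₐ[k] S) (u : Rˣ) (F : LaurentPolynomial k) :
    φ (laurentEval (k := k) u F) = laurentEval (k := k) (Units.map (φ : R →* S) u) F := by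
  have : φ.comp (laurentEval (k := k) u) = laurentEval (k := k) (Units.map (φ : R →* S) u) :=
    AddMonoidAlgebra.algHom_ext (fun n => by
      rw [show (AddMonoidAlgebra.single n (1:k)) = T n from rfl]
      simp [laurentEval_T, ← map_zpow]) (Subsingleton.elim _ _)
  exact DFunLike.congr_fun this F

set_option maxHeartbeats 1000000 in
theorem stmt_10 {k : Type*} [Field k] [CharZero k] (g : ℕ) (hg : 3 ≤ g)
    (F : LaurentPolynomial k) (p q : Polynomial k)
    (s : DualNumber (LaurentPolynomial k)) (t' : (DualNumber (LaurentPolynomial k))ˣ)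
    -- `s⁻¹ = t + F(t)η`
    (hs : s * ((tUnit k : DualNumber (LaurentPolynomial k)) + inl F * DualNumber.eps) = 1)
    -- `t = t' + q(t)η`
    (ht : (tUnit k : DualNumber (LaurentPolynomial k)) =
      (t' : DualNumber (LaurentPolynomial k)) +
        Polynomial.aeval (tUnit k : DualNumber (LaurentPolynomial k)) q * DualNumber.eps) :
    -- with `s' = s + p(s)ε` and `ε = t^{-g-1}η`:
    (s + Polynomial.aeval s p *
        ((((tUnit k)⁻¹ : (DualNumber (LaurentPolynomial k))ˣ) :
          DualNumber (LaurentPolynomial k)) ^ (g + 1) * DualNumber.eps)) *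
      ((t' : DualNumber (LaurentPolynomial k)) +
        (laurentEval t' F + Polynomial.aeval (t' : DualNumber (LaurentPolynomial k)) q -
            ((t'⁻¹ : (DualNumber (LaurentPolynomial k))ˣ) :
              DualNumber (LaurentPolynomial k)) ^ (g - 1) *
              Polynomial.aeval ((t'⁻¹ : (DualNumber (LaurentPolynomial k))ˣ) :
                DualNumber (LaurentPolynomial k)) p) * DualNumber.eps) = 1 := by
  have hg1 : (1:ℕ) ≤ g := by omega
  let R := LaurentPolynomial k
  let A := DualNumber R
  let φ : A →ₐ[k] R := TrivSqZeroExt.fstHom k R R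
  let φm : A →* R := MonoidHomClass.toMonoidHom φ
  have hφ' : ∀ x : A, φ x = fst x := fun _ => rfl
  have htu : fst (tUnit k : A) = T 1 := by rw [tUnit, IsUnit.unit_spec]; rfl
  have hts : snd (tUnit k : A) = 0 := by rw [tUnit, IsUnit.unit_spec]; rfl
  have h1 := congrArg fst hs
  have h2 := congrArg snd hs
  have h3 := congrArg fst ht
  have h4 := congrArg snd ht
  simp [htu, hts] at h1 h2 h3 h4
  -- units mapped down
  have hmapt : Units.map φm (tUnit k) = Tu k := Units.ext htu
  have hmapt' : Units.map φm t' = Tu k := Units.ext h3.symm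
  have hinvtu : fst (((tUnit k)⁻¹ : Aˣ) : A) = T (-1) := by
    have := congrArg Units.val (congrArg Inv.inv hmapt)
    exact this
  have hinvt' : fst ((t'⁻¹ : Aˣ) : A) = T (-1) := by
    have := congrArg Units.val (congrArg Inv.inv hmapt')
    exact this
  have hF : fst (laurentEval t' F) = F := by
    rw [← hφ' _, algHom_laurentEval, hmapt', laurentEval_Tu]
  have haev : ∀ (x : A) (r : Polynomial k), fst (Polynomial.aeval x r) = Polynomial.aeval (fst x) r :=
    fun x r => (Polynomial.aeval_algHom_apply φ x r).symm
  refine TrivSqZeroExt.ext ?_ ?_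
  · simp [h1, ← h3]
  · simp [hF, haev, hinvt', hinvtu, ← h3, fst_pow]
    rw [haev, htu] at h4
    have hT11 : (T 1 : LaurentPolynomial k) * T (-1) = 1 := by
      rw [← T_add]; norm_num [T_zero]
    have hfs : fst s = T (-1) := by
      have := congrArg (· * T (-1)) h1
      simpa [mul_assoc, hT11] using this
    have h5 : snd (t' : A) = -(Polynomial.aeval (T 1 : LaurentPolynomial k) q) :=
      eq_neg_of_add_eq_zero_left h4.symm
    have h2' : (T (-1) : LaurentPolynomial k) * F + snd s * T 1 = 0 := by
      rw [← hfs]; exact h2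
    have hTg : (T (-1) : LaurentPolynomial k) * T (-(↑(g-1):ℤ)) = T (-(g:ℤ)) := by
      rw [← T_add]; congr 1; omega
    rw [hfs, h5]
    exact ringlemma _ _ _ _ _ _ _ _ h2' hTg
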